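/- Let W be a finite Coxeter group and σ an automorphism with σ(I) = I. Let O be a σ-twisted conjugacy class, w, v ∈ O both of minimal length in O, and suppose the statement (P1)–(P2) machinery holds (specifically: supp_σ(w)-cuspidality and minimality transfer). Then there exist x ∈ W^{supp_σ(w)} and w' ∈ W_{supp_σ(w)} with w' = b w σ(b)⁻¹ for some b ∈ W_{supp_σ(w)}, v = x w' σ(x)⁻¹, ℓ(w') = ℓ(v) = ℓ(w), and ℓ(x w') = ℓ(x) + ℓ(w'). In particular w' is elementarily strongly σ-conjugate to v. -/

import Mathlib

open CoxeterSystem List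
open scoped Classical

variable {B W : Type*} [Group W] {M : CoxeterMatrix B} (cs : CoxeterSystem M W)

/-- The support of `w`. -/
def Supp (cs : CoxeterSystem M W) (w : W) : Set B :=
  {i : B | ∃ ω : List B, cs.IsReduced ω ∧ w = cs.wordProd ω ∧ i ∈ ω}

/-- The `σ`-support `supp_σ(w) = ⋃_{n ≥ 0} σⁿ(supp(w))`, `σ` permuting `I` via `p`. -/
def SuppTw (cs : CoxeterSystem M W) (p : B ≃ B) (w : W) : Set B :=
  ⋃ n : ℕ, (⇑p)^[n] '' Supp cs w


namespace SEAux

/-- sign-flip permutation of `W × ℤˣ` associated to a simple reflection. -/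
noncomputable def eta (i : B) : Equiv.Perm (W × ℤˣ) :=
  Function.Involutive.toPerm
    (fun x => (cs.simple i * x.1 * cs.simple i,
      if x.1 = cs.simple i then -x.2 else x.2))
    (by
      rintro ⟨t, ε⟩
      have hss : cs.simple i * cs.simple i = 1 := cs.simple_mul_simple_self i
      have hs' : ∀ x : W, cs.simple i * (cs.simple i * x) = x := fun x => by
        rw [← mul_assoc, hss, one_mul]
      have hcond : (cs.simple i * t * cs.simple i = cs.simple i) ↔ t = cs.simple i := by
        constructor
        · intro h
          have := congrArg (fun z => cs.simple i * z * cs.simple i) h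
          simpa [mul_assoc, hs', hss, mul_one] using this
        · intro h
          rw [h]; simp only [mul_assoc, hss, one_mul]
      simp only [hcond, Prod.mk.injEq]
      refine ⟨by simp only [mul_assoc, hs', hss, mul_one], ?_⟩
      by_cases h : t = cs.simple i <;> simp [h])

lemma eta_apply (i : B) (t : W) (ε : ℤˣ) :
    eta cs i (t, ε) = (cs.simple i * t * cs.simple i,
      if t = cs.simple i then -ε else ε) := rfl

lemma eta_mul_pow (i j : B) (k : ℕ) : ∀ (t : W) (ε : ℤˣ),
    ((eta cs i * eta cs j) ^ k) (t, ε) =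
      ((cs.simple i * cs.simple j) ^ k * t * (cs.simple j * cs.simple i) ^ k,
        (∏ r ∈ Finset.range (2 * k),
          (if t = cs.simple j * (cs.simple i * cs.simple j) ^ r then (-1 : ℤˣ) else 1)) * ε) := by
  set a := cs.simple i with ha
  set b := cs.simple j with hb
  have haa : a * a = 1 := cs.simple_mul_simple_self i
  have hbb : b * b = 1 := cs.simple_mul_simple_self j
  have haa' : ∀ x : W, a * (a * x) = x := fun x => by rw [← mul_assoc, haa, one_mul]
  have hbb' : ∀ x : W, b * (b * x) = x := fun x => by rw [← mul_assoc, hbb, one_mul]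
  have master : ∀ r : ℕ, (b*a) * (b * (a*b)^r) * (a*b) = b * (a*b)^(r+2) := by
    intro r
    calc (b*a) * (b * (a*b)^r) * (a*b)
        = b * (a * (b * ((a*b)^r * (a*b)))) := by simp only [mul_assoc]
      _ = b * (a * (b * (a*b)^(r+1))) := by rw [← pow_succ]
      _ = b * ((a*b) * (a*b)^(r+1)) := by simp only [mul_assoc]
      _ = b * (a*b)^(r+2) := by rw [← pow_succ']
  have lred : ∀ u : W, (b*a) * (a*b*u*(b*a)) * (a*b) = u := by
    intro u
    simp only [mul_assoc, haa', hbb', haa, hbb, mul_one]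
  have hkey : ∀ (t : W) (r : ℕ),
      (a * b * t * (b * a) = b * (a*b)^r) ↔ (t = b * (a*b)^(r+2)) := by
    intro t r
    constructor
    · intro h
      rw [← master r, ← h]
      exact (lred t).symm
    · intro h
      rw [h, ← master r]
      simp only [mul_assoc, haa', hbb', haa, hbb, mul_one]
  induction k with
  | zero => intro t ε; simp
  | succ k ih =>
      intro t ε
      have hc2 : ∀ t : W, (b * t * b = a) ↔ (t = b * (a*b)) := by
        intro t
        constructor
        · intro h
          have := congrArg (fun z => b * z * b) h
          simp only [mul_assoc, hbb', hbb, mul_one] at this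
          rw [this]
        · intro h
          rw [h]
          simp only [mul_assoc, hbb', hbb, mul_one]
      have hFx : (eta cs i * eta cs j) (t, ε) =
          (a * b * t * (b * a),
            (if t = b * (a*b) then (-1:ℤˣ) else 1) * ((if t = b then (-1:ℤˣ) else 1) * ε)) := by
        rw [Equiv.Perm.mul_apply, eta_apply, eta_apply, ← ha, ← hb]
        simp only [Prod.mk.injEq]
        constructor
        · simp only [mul_assoc]
        · rw [hc2 t]
          by_cases h0 : t = b <;> by_cases h1 : t = b * (a*b) <;> simp [h0, h1] <;>
            by_cases hab : a * b = 1 <;> simp [hab]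
      rw [pow_succ, Equiv.Perm.mul_apply, hFx, ih]
      simp only [Prod.mk.injEq]
      constructor
      · rw [pow_succ, pow_succ']
        simp only [mul_assoc]
      · simp only [hkey]
        have h2k : 2 * (k+1) = (2*k + 1) + 1 := by ring
        rw [h2k, Finset.prod_range_succ', Finset.prod_range_succ']
        have e1 : ∀ r : ℕ, r + 1 + 1 = r + 2 := fun r => rfl
        have e2 : (0:ℕ) + 1 = 1 := rfl
        simp only [e1, e2, pow_zero, pow_one, mul_one]
        simp only [mul_assoc]

lemma eta_liftable : M.IsLiftable (fun i => eta cs i) := by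
  intro i j
  apply Equiv.ext
  rintro ⟨t, ε⟩
  rw [Equiv.Perm.one_apply]
  rw [eta_mul_pow cs i j (M i j) t ε]
  rw [cs.simple_mul_simple_pow i j, cs.simple_mul_simple_pow' i j]
  rw [one_mul, mul_one]
  have hper : ∀ r : ℕ,
      cs.simple j * (cs.simple i * cs.simple j) ^ (M i j + r)
        = cs.simple j * (cs.simple i * cs.simple j) ^ r := by
    intro r
    rw [pow_add, cs.simple_mul_simple_pow i j, one_mul]
  have : (∏ r ∈ Finset.range (2 * M i j),
      (if t = cs.simple j * (cs.simple i * cs.simple j) ^ r then (-1 : ℤˣ) else 1)) = 1 := by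
    rw [two_mul, Finset.prod_range_add]
    simp only [hper]
    rw [← Finset.prod_mul_distrib]
    apply Finset.prod_eq_one
    intro r _
    by_cases h : t = cs.simple j * (cs.simple i * cs.simple j) ^ r <;> simp [h]
  rw [this, one_mul]

/-- The parity homomorphism into permutations of `W × ℤˣ`. -/
noncomputable def phi : W →* Equiv.Perm (W × ℤˣ) :=
  cs.lift ⟨fun i => eta cs i, eta_liftable cs⟩

lemma phi_simple (i : B) : phi cs (cs.simple i) = eta cs i :=
  cs.lift_apply_simple (eta_liftable cs) i

/-- Sign formula: the second component of `phi ((π ω)⁻¹) (t, ε)` records the parity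
of the number of occurrences of `t` in the left inversion sequence of `ω`. -/
lemma phi_inv_wordProd (ω : List B) : ∀ (t : W) (ε : ℤˣ),
    phi cs ((cs.wordProd ω)⁻¹) (t, ε) =
      ((cs.wordProd ω)⁻¹ * t * cs.wordProd ω,
        if Odd (List.count t (cs.leftInvSeq ω)) then -ε else ε) := by
  induction ω with
  | nil => intro t ε; simp [CoxeterSystem.leftInvSeq]
  | cons i ω ih =>
      intro t ε
      have hss : cs.simple i * cs.simple i = 1 := cs.simple_mul_simple_self i
      have hs' : ∀ x : W, cs.simple i * (cs.simple i * x) = x := fun x => by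
        rw [← mul_assoc, hss, one_mul]
      rw [cs.wordProd_cons, mul_inv_rev, map_mul, Equiv.Perm.mul_apply]
      have h1 : phi cs ((cs.simple i)⁻¹) (t, ε) =
          (cs.simple i * t * cs.simple i, if t = cs.simple i then -ε else ε) := by
        rw [cs.inv_simple, phi_simple, eta_apply]
      rw [h1, ih]
      have hcnt : List.count t (cs.leftInvSeq (i :: ω)) =
          (if t = cs.simple i then 1 else 0) +
            List.count (cs.simple i * t * cs.simple i) (cs.leftInvSeq ω) := by
      -- lis (i :: ω) = s i :: map (conj (s i)) (lis ω)
        rw [show cs.leftInvSeq (i :: ω)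
            = cs.simple i :: List.map (⇑(MulAut.conj (cs.simple i))) (cs.leftInvSeq ω) from rfl]
        rw [List.count_cons]
        have h2 : t = MulAut.conj (cs.simple i) (cs.simple i * t * cs.simple i) := by
          rw [MulAut.conj_apply, cs.inv_simple]
          simp only [mul_assoc, hs', hss, mul_one]
        have hmap : List.count t (List.map (⇑(MulAut.conj (cs.simple i))) (cs.leftInvSeq ω))
            = List.count (cs.simple i * t * cs.simple i) (cs.leftInvSeq ω) := by
          nth_rewrite 1 [h2]
          rw [List.count_map_of_injective _ _ (MulAut.conj (cs.simple i)).injective]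
        rw [hmap, add_comm]
        simp only [beq_iff_eq]
        by_cases h : t = cs.simple i <;> simp [h, eq_comm]
      rw [hcnt]
      simp only [Prod.mk.injEq]
      constructor
      · rw [cs.inv_simple]
        simp only [mul_assoc]
      · set c := List.count (cs.simple i * t * cs.simple i) (cs.leftInvSeq ω) with hc0
        by_cases h : t = cs.simple i <;>
          rcases Nat.even_or_odd c with hc | hc <;>
            simp [h, hc, Nat.odd_add, ← Nat.not_odd_iff_even, ← Nat.not_even_iff_odd]

lemma leftInvSeq_append (α β : List B) :
    cs.leftInvSeq (α ++ β) =
      cs.leftInvSeq α ++ (cs.leftInvSeq β).map (⇑(MulAut.conj (cs.wordProd α))) := by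
  induction α with
  | nil =>
      rw [List.nil_append, cs.wordProd_nil,
        show cs.leftInvSeq ([] : List B) = [] from rfl, List.nil_append]
      simp
  | cons k α ih =>
      rw [List.cons_append]
      rw [show cs.leftInvSeq (k :: (α ++ β))
          = cs.simple k :: List.map (⇑(MulAut.conj (cs.simple k))) (cs.leftInvSeq (α ++ β)) from rfl]
      rw [show cs.leftInvSeq (k :: α)
          = cs.simple k :: List.map (⇑(MulAut.conj (cs.simple k))) (cs.leftInvSeq α) from rfl]
      rw [ih, List.map_append, List.cons_append, List.map_map]
      congr 2
      rw [cs.wordProd_cons, map_mul]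
      rfl

lemma parity_count_leftInvSeq_invariant {ω ω' : List B} (h : cs.wordProd ω = cs.wordProd ω')
    (t : W) : Odd (List.count t (cs.leftInvSeq ω)) ↔ Odd (List.count t (cs.leftInvSeq ω')) := by
  have h1 := phi_inv_wordProd cs ω t 1
  have h2 := phi_inv_wordProd cs ω' t 1
  rw [h] at h1
  rw [h1] at h2
  have h3 := congrArg Prod.snd h2
  simp only at h3
  by_cases o1 : Odd (List.count t (cs.leftInvSeq ω)) <;>
    by_cases o2 : Odd (List.count t (cs.leftInvSeq ω')) <;>
      simp [o1, o2] at h3 ⊢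

lemma count_refl_word_odd (δ : List B) (i : B) :
    Odd (List.count (cs.wordProd δ * cs.simple i * (cs.wordProd δ)⁻¹)
      (cs.leftInvSeq (δ ++ i :: δ.reverse))) := by
  induction δ with
  | nil => simp [CoxeterSystem.leftInvSeq]
  | cons k δ ih =>
      set t' := cs.wordProd δ * cs.simple i * (cs.wordProd δ)⁻¹ with ht'
      have hγ' : cs.wordProd (δ ++ i :: δ.reverse) = t' := by
        rw [cs.wordProd_append, cs.wordProd_cons, cs.wordProd_reverse, ← mul_assoc]
      have hsk : cs.simple k * cs.simple k = 1 := cs.simple_mul_simple_self k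
      have hsk' : ∀ x : W, cs.simple k * (cs.simple k * x) = x := fun x => by
        rw [← mul_assoc, hsk, one_mul]
      have hcond : (t' = t' * cs.simple k * t'⁻¹) ↔ (t' = cs.simple k) := by
        constructor
        · intro h
          have h2 := congrArg (fun z => t'⁻¹ * z * t') h
          simp only [mul_assoc, inv_mul_cancel_left, inv_mul_cancel, one_mul, mul_one] at h2
          exact h2
        · intro h
          rw [h, cs.inv_simple, mul_assoc, hsk, mul_one]
      have hcond2 : (cs.simple k * t' * cs.simple k = cs.simple k) ↔ (t' = cs.simple k) := by
        constructor
        · intro h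
          have h2 := congrArg (fun z => cs.simple k * z * cs.simple k) h
          simp only [mul_assoc, hsk', hsk, mul_one] at h2
          rw [h2]
          exact one_mul _
        · intro h
          rw [h, mul_assoc, hsk, mul_one]
      have ht : cs.wordProd (k :: δ) * cs.simple i * (cs.wordProd (k :: δ))⁻¹
          = cs.simple k * t' * cs.simple k := by
        rw [cs.wordProd_cons, mul_inv_rev, cs.inv_simple, ht']
        simp only [mul_assoc]
      rw [ht]
      have hlist : (k :: δ) ++ i :: (k :: δ).reverse
          = k :: ((δ ++ i :: δ.reverse) ++ [k]) := by
        simp only [List.reverse_cons, List.cons_append, List.append_assoc]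
      rw [hlist]
      rw [show cs.leftInvSeq (k :: ((δ ++ i :: δ.reverse) ++ [k]))
          = cs.simple k :: List.map (⇑(MulAut.conj (cs.simple k)))
              (cs.leftInvSeq ((δ ++ i :: δ.reverse) ++ [k])) from rfl]
      rw [List.count_cons]
      have hmap : List.count (cs.simple k * t' * cs.simple k)
          (List.map (⇑(MulAut.conj (cs.simple k)))
            (cs.leftInvSeq ((δ ++ i :: δ.reverse) ++ [k])))
          = List.count t' (cs.leftInvSeq ((δ ++ i :: δ.reverse) ++ [k])) := by
        nth_rewrite 1 [show cs.simple k * t' * cs.simple k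
            = MulAut.conj (cs.simple k) t' from by rw [MulAut.conj_apply, cs.inv_simple]]
        rw [List.count_map_of_injective _ _ (MulAut.conj (cs.simple k)).injective]
      rw [hmap]
      rw [leftInvSeq_append cs (δ ++ i :: δ.reverse) [k], List.count_append, hγ']
      have e2 : List.count t' ((cs.leftInvSeq [k]).map (⇑(MulAut.conj t')))
          = if t' = cs.simple k then 1 else 0 := by
        rw [show cs.leftInvSeq [k] = [cs.simple k] from rfl]
        rw [show ([cs.simple k] : List W).map (⇑(MulAut.conj t'))
            = [t' * cs.simple k * t'⁻¹] from by
          rw [List.map_cons, List.map_nil, MulAut.conj_apply]]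
        simp only [List.count_cons, List.count_nil, beq_iff_eq, zero_add]
        by_cases h : t' = cs.simple k
        · simp [h, ← hcond, hcond.mpr h]
        · simp [h]
          exact fun hh => h (hcond.mp hh.symm)
      rw [e2]
      obtain ⟨m, hm⟩ := ih
      by_cases h : t' = cs.simple k
      · rw [if_pos h]
        rw [if_pos (show (cs.simple k == cs.simple k * t' * cs.simple k) = true from by
          simp only [beq_iff_eq]; exact (hcond2.mpr h).symm)]
        rw [hm]
        exact ⟨m + 1, by omega⟩
      · rw [if_neg h]
        rw [if_neg (show ¬((cs.simple k == cs.simple k * t' * cs.simple k) = true) from by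
          simp only [beq_iff_eq]
          exact fun hh => h (hcond2.mp hh.symm))]
        rw [hm]
        exact ⟨m, by omega⟩

lemma mem_leftInvSeq_of_isLeftInversion {ω : List B} (hω : cs.IsReduced ω) {t : W}
    (ht : cs.IsLeftInversion (cs.wordProd ω) t) : t ∈ cs.leftInvSeq ω := by
  obtain ⟨hrefl, hlen⟩ := ht
  have htt : t * t = 1 := hrefl.mul_self
  obtain ⟨u, i, htu⟩ := hrefl
  obtain ⟨δ, hδred, hδ⟩ := cs.exists_reduced_word' u
  obtain ⟨ω₂, hω₂red, hω₂⟩ := cs.exists_reduced_word' (t * cs.wordProd ω)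
  have hγ : cs.wordProd (δ ++ i :: δ.reverse) = t := by
    rw [cs.wordProd_append, cs.wordProd_cons, cs.wordProd_reverse, ← mul_assoc, ← hδ, ← htu]
  have hfull : cs.wordProd ((δ ++ i :: δ.reverse) ++ ω₂) = cs.wordProd ω := by
    rw [cs.wordProd_append, hγ, ← hω₂, ← mul_assoc, htt, one_mul]
  have hpar := parity_count_leftInvSeq_invariant cs hfull t
  have hc2 : List.count t ((cs.leftInvSeq ω₂).map (⇑(MulAut.conj t))) = 0 := by
    nth_rewrite 1 [show t = MulAut.conj t t from by
      rw [MulAut.conj_apply, mul_assoc, mul_inv_cancel, mul_one]]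
    rw [List.count_map_of_injective _ _ (MulAut.conj t).injective]
    apply List.count_eq_zero_of_not_mem
    intro hmem
    have hinv := cs.isLeftInversion_of_mem_leftInvSeq hω₂red hmem
    rw [← hω₂] at hinv
    have h2 := hinv.2
    rw [← mul_assoc, htt, one_mul] at h2
    omega
  have hodd : Odd (List.count t (cs.leftInvSeq ω)) := by
    apply hpar.mp
    rw [leftInvSeq_append, List.count_append, hγ, hc2, add_zero]
    have hco := count_refl_word_odd cs δ i
    rw [show cs.wordProd δ * cs.simple i * (cs.wordProd δ)⁻¹ = t from by
      rw [← hδ, ← htu]] at hco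
    exact hco
  have hne : List.count t (cs.leftInvSeq ω) ≠ 0 := by
    obtain ⟨m, hm⟩ := hodd
    omega
  exact List.count_pos_iff.mp (Nat.pos_of_ne_zero hne)

lemma mem_rightInvSeq_of_isRightInversion {ω : List B} (hω : cs.IsReduced ω) {t : W}
    (ht : cs.IsRightInversion (cs.wordProd ω) t) : t ∈ cs.rightInvSeq ω := by
  have hred : cs.IsReduced ω.reverse := (cs.isReduced_reverse_iff ω).mpr hω
  have hinv : cs.IsLeftInversion (cs.wordProd ω.reverse) t := by
    rw [cs.wordProd_reverse]
    exact (cs.isLeftInversion_inv_iff).mpr ht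
  have hmem := mem_leftInvSeq_of_isLeftInversion cs hred hinv
  rw [cs.leftInvSeq_reverse] at hmem
  exact List.mem_reverse.mp hmem

/-- Simple exchange: if `i` is a right descent of the product of a reduced word `ω`,
then multiplying by `s i` equals the product of `ω` with one letter deleted. -/
lemma exchange {ω : List B} (hω : cs.IsReduced ω) {i : B}
    (hd : cs.IsRightDescent (cs.wordProd ω) i) :
    ∃ j < ω.length, cs.wordProd ω * cs.simple i = cs.wordProd (ω.eraseIdx j) := by
  have hri : cs.IsRightInversion (cs.wordProd ω) (cs.simple i) :=
    (cs.isRightInversion_simple_iff_isRightDescent _ i).mpr hd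
  have hmem := mem_rightInvSeq_of_isRightInversion cs hω hri
  obtain ⟨j, hj, hjget⟩ := List.mem_iff_getElem.mp hmem
  rw [cs.length_rightInvSeq] at hj
  refine ⟨j, hj, ?_⟩
  rw [← cs.wordProd_mul_getD_rightInvSeq ω j]
  congr 1
  rw [← hjget]
  exact (List.getD_eq_getElem _ 1 (by rw [cs.length_rightInvSeq]; exact hj)).symm

lemma wordProd_mem_closure {K : Set B} {ω : List B} (hK : ∀ i ∈ ω, i ∈ K) :
    cs.wordProd ω ∈ Subgroup.closure (cs.simple '' K) := by
  induction ω with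
  | nil => rw [cs.wordProd_nil]; exact Subgroup.one_mem _
  | cons i ω ih =>
      rw [cs.wordProd_cons]
      exact Subgroup.mul_mem _
        (Subgroup.subset_closure ⟨i, hK i (List.mem_cons_self), rfl⟩)
        (ih fun j hj => hK j (List.mem_cons_of_mem i hj))

lemma exists_word_of_mem_closure {K : Set B} {u : W}
    (hu : u ∈ Subgroup.closure (cs.simple '' K)) :
    ∃ ω : List B, (∀ i ∈ ω, i ∈ K) ∧ u = cs.wordProd ω := by
  induction hu using Subgroup.closure_induction with
  | mem g hg =>
      obtain ⟨i, hi, rfl⟩ := hg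
      exact ⟨[i], by simpa using hi, (cs.wordProd_singleton i).symm⟩
  | one => exact ⟨[], by simp, (cs.wordProd_nil).symm⟩
  | mul g g' _ _ ihg ihg' =>
      obtain ⟨ω₁, h1, rfl⟩ := ihg
      obtain ⟨ω₂, h2, rfl⟩ := ihg'
      exact ⟨ω₁ ++ ω₂, fun i hi => (List.mem_append.mp hi).elim (h1 i) (h2 i),
        (cs.wordProd_append ω₁ ω₂).symm⟩
  | inv g _ ihg =>
      obtain ⟨ω₁, h1, rfl⟩ := ihg
      exact ⟨ω₁.reverse, fun i hi => h1 i (List.mem_reverse.mp hi),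
        (cs.wordProd_reverse ω₁).symm⟩

lemma exists_shorter_reduced : ∀ (n : ℕ) (ω : List B), ω.length ≤ n →
    ∃ ω' : List B, cs.IsReduced ω' ∧ (∀ i ∈ ω', i ∈ ω) ∧ cs.wordProd ω' = cs.wordProd ω := by
  intro n
  induction n with
  | zero =>
      intro ω hω
      rw [List.length_eq_zero_iff.mp (Nat.le_zero.mp hω)]
      exact ⟨[], by simp [CoxeterSystem.IsReduced], by simp, rfl⟩
  | succ n ih =>
      intro ω hω
      by_cases hred : cs.IsReduced ω
      · exact ⟨ω, hred, fun i hi => hi, rfl⟩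
      -- find the least non-reduced prefix
      have hex : ∃ k, ¬ cs.IsReduced (ω.take k) := ⟨ω.length, by rwa [List.take_length]⟩
      classical
      have hk₀ : ¬ cs.IsReduced (ω.take (Nat.find hex)) := Nat.find_spec hex
      have hk₀min : ∀ m < Nat.find hex, cs.IsReduced (ω.take m) := fun m hm => by
        by_contra hc
        exact absurd (Nat.find_le hc) (Nat.not_le.mpr hm)
      have hk₀pos : Nat.find hex ≠ 0 := by
        intro h
        apply hk₀
        rw [h, List.take_zero]
        simp [CoxeterSystem.IsReduced]
      obtain ⟨k, hk⟩ := Nat.exists_eq_succ_of_ne_zero hk₀pos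
      rw [hk] at hk₀
      have hkred : cs.IsReduced (ω.take k) := hk₀min k (by omega)
      have hk₀le : k + 1 ≤ ω.length := by
        by_contra hc
        apply hk₀
        rw [List.take_of_length_le (by omega)]
        rw [List.take_of_length_le (by omega)] at hkred
        exact hkred
      have hklt : k < ω.length := by omega
      have htake : ω.take (k+1) = ω.take k ++ [ω[k]] := by
        rw [List.take_succ]
        simp [List.getElem?_eq_getElem hklt]
      -- i is a right descent of π (ω.take k)
      have hlen_take : (ω.take k).length = k := by
        rw [List.length_take]; omega
      have hltk : cs.length (cs.wordProd (ω.take (k+1))) < k + 1 := by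
        have h1 : cs.length (cs.wordProd (ω.take (k+1))) ≤ k + 1 := by
          have := cs.length_wordProd_le (ω.take (k+1))
          rwa [List.length_take, min_eq_left (by omega)] at this
        have h2 : cs.length (cs.wordProd (ω.take (k+1))) ≠ k + 1 := by
          intro hc
          apply hk₀
          unfold CoxeterSystem.IsReduced
          rw [hc, List.length_take, min_eq_left (by omega)]
        omega
      have hprod : cs.wordProd (ω.take (k+1)) = cs.wordProd (ω.take k) * cs.simple ω[k] := by
        rw [htake, cs.wordProd_append, cs.wordProd_singleton]
      have hdesc : cs.IsRightDescent (cs.wordProd (ω.take k)) ω[k] := by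
        unfold CoxeterSystem.IsRightDescent
        have hlk : cs.length (cs.wordProd (ω.take k)) = k := by
          have := hkred; unfold CoxeterSystem.IsReduced at this
          rw [this, hlen_take]
        have hne := cs.length_mul_simple_ne (cs.wordProd (ω.take k)) ω[k]
        rw [hlk] at hne
        rw [← hprod] at hne
        rw [hlk, ← hprod]
        omega
      obtain ⟨j, hj, hex2⟩ := exchange cs hkred hdesc
      rw [hlen_take] at hj
      set ω' := ((ω.take k).eraseIdx j) ++ ω.drop (k+1) with hω'
      have hprod' : cs.wordProd ω' = cs.wordProd ω := by
        rw [hω', cs.wordProd_append, ← hex2, ← hprod]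
        rw [← cs.wordProd_append, List.take_append_drop]
      have hlenω' : ω'.length ≤ n := by
        rw [hω', List.length_append, List.length_drop]
        have h1 : ((ω.take k).eraseIdx j).length + 1 = (ω.take k).length :=
          List.length_eraseIdx_add_one (by rw [hlen_take]; omega)
        rw [hlen_take] at h1
        omega
      obtain ⟨ω'', hred'', hsub'', hprod''⟩ := ih ω' hlenω'
      refine ⟨ω'', hred'', ?_, by rw [hprod'', hprod']⟩
      intro i hi
      have hi' := hsub'' i hi
      rw [hω'] at hi'
      rcases List.mem_append.mp hi' with h | h
      · exact (ω.take_sublist k).subset (((ω.take k).eraseIdx_sublist j).subset h)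
      · exact (ω.drop_sublist (k+1)).subset h

lemma exists_reduced_word_subset {K : Set B} {u : W}
    (hu : u ∈ Subgroup.closure (cs.simple '' K)) :
    ∃ ω : List B, cs.IsReduced ω ∧ (∀ i ∈ ω, i ∈ K) ∧ u = cs.wordProd ω := by
  obtain ⟨ω, hK, rfl⟩ := exists_word_of_mem_closure cs hu
  obtain ⟨ω', hred, hsub, hprod⟩ := exists_shorter_reduced cs ω.length ω le_rfl
  exact ⟨ω', hred, fun i hi => hK i (hsub i hi), hprod.symm⟩

/-- If `x` is of minimal length in `x W_K` and `ω` is a reduced word with letters in `K`,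
then `ℓ(x ⬝ π ω) = ℓ(x) + |ω|`. -/
lemma length_mul_wordProd_add {K : Set B} {x : W}
    (hx : ∀ u ∈ Subgroup.closure (cs.simple '' K), cs.length x ≤ cs.length (x * u)) :
    ∀ ω : List B, cs.IsReduced ω → (∀ i ∈ ω, i ∈ K) →
      cs.length (x * cs.wordProd ω) = cs.length x + ω.length := by
  intro ω
  induction ω using List.reverseRecOn with
  | nil => intro _ _; simp
  | append_singleton ω i ih =>
      intro hred hK
      have hred' : cs.IsReduced ω := by
        have := hred.take ω.length
        rwa [List.take_left] at this
      have hK' : ∀ j ∈ ω, j ∈ K := fun j hj => hK j (List.mem_append_left _ hj)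
      have hiK : i ∈ K := hK i (List.mem_append_right _ (List.mem_singleton.mpr rfl))
      have ihl := ih hred' hK'
      have hprod : cs.wordProd (ω ++ [i]) = cs.wordProd ω * cs.simple i := by
        rw [cs.wordProd_append, cs.wordProd_singleton]
      rw [hprod, List.length_append, List.length_singleton, ← mul_assoc]
      -- suppose not; then i is a right descent of x * π ω
      rcases cs.length_mul_simple (x * cs.wordProd ω) i with h | h
  -- good case
      · rw [h, ihl]; omega
  -- bad case: derive a contradiction
      · exfalso
        have hdesc : cs.IsRightDescent (x * cs.wordProd ω) i := by
          unfold CoxeterSystem.IsRightDescent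
          have hne := cs.length_mul_simple_ne (x * cs.wordProd ω) i
          omega
        obtain ⟨α, hαred, hαx⟩ := cs.exists_reduced_word' x
        have hαlen : cs.length x = α.length := by
          have := hαred; unfold CoxeterSystem.IsReduced at this
          rw [hαx, this]
        have hbigred : cs.IsReduced (α ++ ω) := by
          unfold CoxeterSystem.IsReduced
          rw [cs.wordProd_append, ← hαx, List.length_append]
          rw [ihl, hαlen]
        have hbigprod : cs.wordProd (α ++ ω) = x * cs.wordProd ω := by
          rw [cs.wordProd_append, ← hαx]
        have hdesc' : cs.IsRightDescent (cs.wordProd (α ++ ω)) i := by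
          rwa [hbigprod]
        obtain ⟨j, hj, hex⟩ := exchange cs hbigred hdesc'
        rw [hbigprod] at hex
        rcases Nat.lt_or_ge j α.length with hjα | hjα
        · -- deletion in the x-part: contradicts minimality of x
          rw [List.eraseIdx_append_of_lt_length hjα] at hex
          rw [cs.wordProd_append] at hex
          have hu : x * (cs.wordProd ω * cs.simple i * (cs.wordProd ω)⁻¹)
              = cs.wordProd (α.eraseIdx j) := by
            rw [← mul_assoc, ← mul_assoc, hex, mul_inv_cancel_right]
          have humem : cs.wordProd ω * cs.simple i * (cs.wordProd ω)⁻¹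
              ∈ Subgroup.closure (cs.simple '' K) := by
            apply Subgroup.mul_mem
            apply Subgroup.mul_mem
            · exact wordProd_mem_closure cs hK'
            · exact Subgroup.subset_closure ⟨i, hiK, rfl⟩
            · exact Subgroup.inv_mem _ (wordProd_mem_closure cs hK')
          have hle := hx _ humem
          rw [hu] at hle
          have hlelen := cs.length_wordProd_le (α.eraseIdx j)
          have herase : (α.eraseIdx j).length + 1 = α.length :=
            List.length_eraseIdx_add_one hjα
          omega
        · -- deletion in the ω-part: contradicts reducedness of ω ++ [i]
          rw [List.eraseIdx_append_of_length_le hjα] at hex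
          rw [cs.wordProd_append] at hex
          have hcanc : cs.wordProd ω * cs.simple i
              = cs.wordProd (ω.eraseIdx (j - α.length)) := by
            rw [← hαx] at hex
            have hex' : x * (cs.wordProd ω * cs.simple i)
                = x * cs.wordProd (ω.eraseIdx (j - α.length)) := by
              rw [← mul_assoc]; exact hex
            exact mul_left_cancel hex'
          have hlen1 : cs.length (cs.wordProd (ω ++ [i])) = ω.length + 1 := by
            have := hred; unfold CoxeterSystem.IsReduced at this
            rw [this, List.length_append, List.length_singleton]
          have hjω : j - α.length < ω.length := by
            rw [List.length_append] at hj
            omega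
          have herase : (ω.eraseIdx (j - α.length)).length + 1 = ω.length :=
            List.length_eraseIdx_add_one hjω
          have hlelen := cs.length_wordProd_le (ω.eraseIdx (j - α.length))
          rw [← hcanc, ← hprod] at hlelen
          omega

lemma sigma_wordProd (σ : W ≃* W) (p : B ≃ B) (hp : ∀ i : B, σ (cs.simple i) = cs.simple (p i))
    (ω : List B) : σ (cs.wordProd ω) = cs.wordProd (ω.map p) := by
  induction ω with
  | nil => simp
  | cons i ω ih => rw [cs.wordProd_cons, map_mul, hp, ih, List.map_cons, cs.wordProd_cons]

lemma length_sigma_le (σ : W ≃* W) (p : B ≃ B) (hp : ∀ i : B, σ (cs.simple i) = cs.simple (p i))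
    (g : W) : cs.length (σ g) ≤ cs.length g := by
  obtain ⟨ω, hlen, hprod⟩ := cs.exists_reduced_word g
  rw [hprod, sigma_wordProd cs σ p hp, ← hprod]
  have := cs.length_wordProd_le (ω.map p)
  rw [List.length_map] at this
  have hl := hlen.eq
  rw [← hprod] at hl
  omega

lemma length_sigma (σ : W ≃* W) (p : B ≃ B) (hp : ∀ i : B, σ (cs.simple i) = cs.simple (p i))
    (g : W) : cs.length (σ g) = cs.length g := by
  apply le_antisymm (length_sigma_le cs σ p hp g)
  have hsymm : ∀ j : B, σ.symm (cs.simple j) = cs.simple (p.symm j) := by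
    intro j
    have h1 := hp (p.symm j)
    rw [Equiv.apply_symm_apply] at h1
    rw [← h1, MulEquiv.symm_apply_apply]
  have := length_sigma_le cs σ.symm p.symm hsymm (σ g)
  rwa [MulEquiv.symm_apply_apply] at this

lemma p_mem_suppTw (p : B ≃ B) (w : W) {i : B} (hi : i ∈ SuppTw cs p w) :
    p i ∈ SuppTw cs p w := by
  obtain ⟨n, y, hy, rfl⟩ : ∃ n y, y ∈ Supp cs w ∧ (⇑p)^[n] y = i := by
    obtain ⟨s, ⟨n, rfl⟩, hs⟩ := hi
    obtain ⟨y, hy, rfl⟩ := hs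
    exact ⟨n, y, hy, rfl⟩
  refine Set.mem_iUnion.mpr ⟨n + 1, y, hy, ?_⟩
  rw [Function.iterate_succ_apply']

lemma w_mem_suppTw_closure (p : B ≃ B) (w : W) :
    w ∈ Subgroup.closure (cs.simple '' SuppTw cs p w) := by
  obtain ⟨ω, hred, hprod⟩ := cs.exists_reduced_word' w
  have hmem : ∀ i ∈ ω, i ∈ SuppTw cs p w := fun i hi =>
    Set.mem_iUnion.mpr ⟨0, ⟨i, ⟨ω, hred, hprod, hi⟩, rfl⟩⟩
  have := wordProd_mem_closure cs hmem
  rwa [← hprod] at this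

lemma sigma_mem_suppTw_closure (σ : W ≃* W) (p : B ≃ B)
    (hp : ∀ i : B, σ (cs.simple i) = cs.simple (p i)) (w : W) {g : W}
    (hg : g ∈ Subgroup.closure (cs.simple '' SuppTw cs p w)) :
    σ g ∈ Subgroup.closure (cs.simple '' SuppTw cs p w) := by
  induction hg using Subgroup.closure_induction with
  | mem g hg =>
      obtain ⟨i, hi, rfl⟩ := hg
      rw [hp]
      exact Subgroup.subset_closure ⟨p i, p_mem_suppTw cs p w hi, rfl⟩
  | one => rw [map_one]; exact Subgroup.one_mem _
  | mul a a' _ _ iha iha' => rw [map_mul]; exact Subgroup.mul_mem _ iha iha'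
  | inv a _ iha => rw [map_inv]; exact Subgroup.inv_mem _ iha

end SEAux

open SEAux in
/-- Theorem 7.6(b): let `W` be a finite Coxeter group, `σ` an automorphism with
`σ(I) = I`, and `w, v` minimal length elements of a common `σ`-twisted conjugacy class.
Then there are `x ∈ W^{supp_σ(w)}` and `w' = b w σ(b)⁻¹ ∈ W_{supp_σ(w)}` (with
`b ∈ W_{supp_σ(w)}`) such that `v = x w' σ(x)⁻¹`, `ℓ(w') = ℓ(v) = ℓ(w)` and
`ℓ(x w') = ℓ(x) + ℓ(w')`; in particular `w'` is elementarily strongly `σ`-conjugate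
to `v`. -/
theorem min_length_elements_elementarily_strongly_conjugate
    [Finite W] (cs : CoxeterSystem M W)
    (σ : W ≃* W) (p : B ≃ B) (hp : ∀ i : B, σ (cs.simple i) = cs.simple (p i))
    (w v : W)
    (hconj : ∃ y : W, v = y * w * (σ y)⁻¹)
    (hwmin : ∀ y : W, cs.length w ≤ cs.length (y * w * (σ y)⁻¹))
    (hvmin : ∀ y : W, cs.length v ≤ cs.length (y * w * (σ y)⁻¹)) :
    ∃ x b : W,
      (∀ u ∈ Subgroup.closure (cs.simple '' SuppTw cs p w),
        cs.length x ≤ cs.length (x * u)) ∧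
      b ∈ Subgroup.closure (cs.simple '' SuppTw cs p w) ∧
      ∃ w' : W, w' = b * w * (σ b)⁻¹ ∧
        w' ∈ Subgroup.closure (cs.simple '' SuppTw cs p w) ∧
        v = x * w' * (σ x)⁻¹ ∧
        cs.length w' = cs.length v ∧ cs.length v = cs.length w ∧
        cs.length (x * w') = cs.length x + cs.length w' := by
  classical
  set H := Subgroup.closure (cs.simple '' SuppTw cs p w) with hH
  have hσH : ∀ g ∈ H, σ g ∈ H := fun g hg => sigma_mem_suppTw_closure cs σ p hp w hg
  have hwH : w ∈ H := w_mem_suppTw_closure cs p w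
  obtain ⟨y₀, hy₀⟩ := hconj
  set S : Set W := {z | ∃ c, c ∈ H ∧ v = z * (c * w * (σ c)⁻¹) * (σ z)⁻¹} with hS
  have hy₀S : y₀ ∈ S := ⟨1, Subgroup.one_mem _, by simpa using hy₀⟩
  obtain ⟨x, hxS, hxmin⟩ := Set.exists_min_image S cs.length (Set.toFinite S) ⟨y₀, hy₀S⟩
  have hstep : ∀ u ∈ H, ∀ z ∈ S, z * u ∈ S := by
    intro u hu z hz
    obtain ⟨c, hc, hv⟩ := hz
    refine ⟨u⁻¹ * c, Subgroup.mul_mem _ (Subgroup.inv_mem _ hu) hc, ?_⟩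
    rw [hv]
    simp only [map_mul, map_inv, mul_inv_rev, inv_inv]
    group
  have hxmin' : ∀ u ∈ H, cs.length x ≤ cs.length (x * u) :=
    fun u hu => hxmin (x * u) (hstep u hu x hxS)
  obtain ⟨b, hb, hvx⟩ := hxS
  set w' := b * w * (σ b)⁻¹ with hw'
  have hw'H : w' ∈ H :=
    Subgroup.mul_mem _ (Subgroup.mul_mem _ hb hwH) (Subgroup.inv_mem _ (hσH b hb))
  have hlenvw : cs.length v = cs.length w := by
    apply _root_.le_antisymm
    · have := hvmin 1; simpa using this
    · have := hwmin y₀; rw [← hy₀] at this; exact this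
  have hww' : cs.length w ≤ cs.length w' := hwmin b
  obtain ⟨ω, hωred, hωK, hωprod⟩ := exists_reduced_word_subset cs hw'H
  have hadd : cs.length (x * w') = cs.length x + cs.length w' := by
    rw [hωprod, length_mul_wordProd_add cs hxmin' ω hωred hωK]
    congr 1
    have := hωred
    unfold CoxeterSystem.IsReduced at this
    exact this.symm
  have hσx : cs.length ((σ x)⁻¹) = cs.length x := by
    rw [cs.length_inv, length_sigma cs σ p hp]
  have hw'v : cs.length w' ≤ cs.length v := by
    have h2 := cs.length_mul_ge_length_sub_length (x * w') ((σ x)⁻¹)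
    rw [← hvx] at h2
    omega
  have hlenw'v : cs.length w' = cs.length v := _root_.le_antisymm hw'v (hlenvw ▸ hww')
  exact ⟨x, b, hxmin', hb, w', rfl, hw'H, hvx, hlenw'v, hlenvw, hadd⟩
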